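/- Let A : E₁ → E₂ be linear, g : E₂ → R strictly convex (finite-valued), and h : E₁ → R ∪ {+∞} closed proper convex. Then A is constant on the solution set argmin_{x ∈ E₁} { g(A(x)) + h(x) }; i.e. any two minimizers x₁, x₂ satisfy A(x₁) = A(x₂), and consequently h(x₁) = h(x₂). -/

import Mathlib

open Matrix

noncomputable def nuclearNorm {m n : Type*} [Fintype m] [Fintype n] [DecidableEq n]
    (A : Matrix m n ℝ) : ℝ :=
  ((Matrix.posSemidef_conjTranspose_mul_self A).1.eigenvectorUnitary.1 *
    diagonal ((RCLike.ofReal : ℝ → ℝ) ∘ (fun x : ℝ => Real.sqrt x) ∘ (Matrix.posSemidef_conjTranspose_mul_self A).1.eigenvalues) *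
    (star (Matrix.posSemidef_conjTranspose_mul_self A).1.eigenvectorUnitary : Matrix n n ℝ)).trace

noncomputable def opNorm {m n : Type*} [Fintype m] [Fintype n] [DecidableEq m] [DecidableEq n]
    (A : Matrix m n ℝ) : ℝ :=
  ‖(LinearMap.toContinuousLinearMap
      (Matrix.toEuclideanLin A : EuclideanSpace ℝ n →ₗ[ℝ] EuclideanSpace ℝ m))‖

def finner {m n : Type*} [Fintype m] [Fintype n] (A B : Matrix m n ℝ) : ℝ :=
  (Aᵀ * B).trace

noncomputable def nuclearSubdiff {m n : Type*} [Fintype m] [Fintype n] [DecidableEq n]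
    (X : Matrix m n ℝ) : Set (Matrix m n ℝ) :=
  {Y | ∀ Z, nuclearNorm X + finner Y (Z - X) ≤ nuclearNorm Z}

def rectDiag (n p : ℕ) (s : Fin p → ℝ) : Matrix (Fin n) (Fin p) ℝ :=
  Matrix.of fun i j => if (i : ℕ) = (j : ℕ) then s j else 0

def blockIR (n p r : ℕ) (R : Matrix (Fin (n - r)) (Fin (p - r)) ℝ) :
    Matrix (Fin n) (Fin p) ℝ :=
  Matrix.of fun i j =>
    if h : (i : ℕ) < r ∨ (j : ℕ) < r then (if (i : ℕ) = (j : ℕ) then 1 else 0)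
    else R ⟨i - r, by have := i.isLt; omega⟩ ⟨j - r, by have := j.isLt; omega⟩

theorem linear_map_constant_on_argmin
    {E₁ E₂ : Type*} [NormedAddCommGroup E₁] [InnerProductSpace ℝ E₁] [FiniteDimensional ℝ E₁]
    [NormedAddCommGroup E₂] [InnerProductSpace ℝ E₂] [FiniteDimensional ℝ E₂]
    (A : E₁ →ₗ[ℝ] E₂) (g : E₂ → ℝ) (hg : StrictConvexOn ℝ Set.univ g)
    (h : E₁ → EReal) (hbot : ∀ x, h x ≠ ⊥) (hproper : ∃ x, h x ≠ ⊤)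
    (hconv : Convex ℝ {q : E₁ × ℝ | h q.1 ≤ (q.2 : EReal)})
    (hclosed : IsClosed {q : E₁ × ℝ | h q.1 ≤ (q.2 : EReal)})
    (x₁ x₂ : E₁)
    (h₁ : ∀ x, ((g (A x₁) : EReal) + h x₁) ≤ ((g (A x) : EReal) + h x))
    (h₂ : ∀ x, ((g (A x₂) : EReal) + h x₂) ≤ ((g (A x) : EReal) + h x)) :
    A x₁ = A x₂ ∧ h x₁ = h x₂ := by
  obtain ⟨x₀, hx₀⟩ := hproper
  have hx₀b := hbot x₀
  set r₀ : ℝ := (h x₀).toReal with hr₀def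
  have hr₀ : (r₀ : EReal) = h x₀ := EReal.coe_toReal hx₀ hx₀b
  -- finiteness of h x₁, h x₂
  have hfin : ∀ y : E₁, (∀ x, ((g (A y) : EReal) + h y) ≤ ((g (A x) : EReal) + h x)) →
      h y ≠ ⊤ := by
    intro y hy hytop
    have := hy x₀
    rw [hytop, ← hr₀, ← EReal.coe_add] at this
    simp at this
    rw [← EReal.coe_add] at this
    exact EReal.coe_ne_top _ this
  have ht₁ : h x₁ ≠ ⊤ := hfin x₁ h₁
  have ht₂ : h x₂ ≠ ⊤ := hfin x₂ h₂
  set r₁ : ℝ := (h x₁).toReal with hr₁def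
  set r₂ : ℝ := (h x₂).toReal with hr₂def
  have hr₁ : (r₁ : EReal) = h x₁ := EReal.coe_toReal ht₁ (hbot x₁)
  have hr₂ : (r₂ : EReal) = h x₂ := EReal.coe_toReal ht₂ (hbot x₂)
  -- equal optimal values
  have e12 : g (A x₁) + r₁ ≤ g (A x₂) + r₂ := by
    have := h₁ x₂
    rw [← hr₁, ← hr₂, ← EReal.coe_add, ← EReal.coe_add] at this
    exact_mod_cast this
  have e21 : g (A x₂) + r₂ ≤ g (A x₁) + r₁ := by
    have := h₂ x₁
    rw [← hr₁, ← hr₂, ← EReal.coe_add, ← EReal.coe_add] at this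
    exact_mod_cast this
  have heq : g (A x₁) + r₁ = g (A x₂) + r₂ := le_antisymm e12 e21
  have hA : A x₁ = A x₂ := by
    by_contra hne
    -- midpoint
    set x := (1/2 : ℝ) • x₁ + (1/2 : ℝ) • x₂ with hxdef
    have hAx : A x = (1/2 : ℝ) • A x₁ + (1/2 : ℝ) • A x₂ := by
      simp [hxdef, map_add, _root_.map_smul]
    have hgx : g (A x) < (1/2) * g (A x₁) + (1/2) * g (A x₂) := by
      rw [hAx]
      have := hg.2 (Set.mem_univ (A x₁)) (Set.mem_univ (A x₂)) hne
        (by norm_num : (0:ℝ) < 1/2) (by norm_num : (0:ℝ) < 1/2) (by norm_num)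
      simpa [smul_eq_mul] using this
    have hmem : ((1/2 : ℝ) • ((x₁, r₁) : E₁ × ℝ) + (1/2 : ℝ) • ((x₂, r₂) : E₁ × ℝ))
        ∈ {q : E₁ × ℝ | h q.1 ≤ (q.2 : EReal)} := by
      apply hconv
      · show h x₁ ≤ (r₁ : EReal); rw [hr₁]
      · show h x₂ ≤ (r₂ : EReal); rw [hr₂]
      · norm_num
      · norm_num
      · norm_num
    have hhx : h x ≤ ((1/2 * r₁ + 1/2 * r₂ : ℝ) : EReal) := by
      simpa [hxdef, Prod.smul_mk, smul_eq_mul] using hmem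
    have key : ((g (A x₁) + r₁ : ℝ) : EReal) < ((g (A x₁) + r₁ : ℝ) : EReal) := by
      calc ((g (A x₁) + r₁ : ℝ) : EReal) = (g (A x₁) : EReal) + h x₁ := by
            rw [EReal.coe_add, hr₁]
        _ ≤ (g (A x) : EReal) + h x := h₁ x
        _ ≤ (g (A x) : EReal) + ((1/2 * r₁ + 1/2 * r₂ : ℝ) : EReal) :=
            add_le_add_right hhx _
        _ = ((g (A x) + (1/2 * r₁ + 1/2 * r₂) : ℝ) : EReal) := by norm_cast
        _ < ((g (A x₁) + r₁ : ℝ) : EReal) := by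
            rw [EReal.coe_lt_coe_iff]
            have : (1/2) * (g (A x₁) + r₁) + (1/2) * (g (A x₂) + r₂) = g (A x₁) + r₁ := by
              rw [← heq]; ring
            nlinarith [hgx]
    exact lt_irrefl _ key
  have hr : r₁ = r₂ := by
    have : g (A x₂) + r₁ = g (A x₂) + r₂ := by rw [← hA] at heq ⊢; linarith [heq]
    linarith
  exact ⟨hA, by rw [← hr₁, ← hr₂, hr]⟩
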